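/- Let L be a De Morgan lattice and define the relation θ on L by: a θ b if and only if there exists f ∈ F_comp with a ⊓ f = b ⊓ f and ¬f ⊔ a = ¬f ⊔ b. Then θ is a congruence on L; ((x ⊓ ¬x) ⊓ (y ⊔ ¬y)) θ (x ⊓ ¬x) holds for all x, y ∈ L; and θ is contained in every congruence θ' on L satisfying ((x ⊓ ¬x) ⊓ (y ⊔ ¬y)) θ' (x ⊓ ¬x) for all x, y ∈ L. (That is, θ is the smallest congruence on L whose quotient is a Kleene lattice.) -/

import Mathlib

/-- A De Morgan lattice: a distributive lattice with an antitone involution. -/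
class DeMorgan (L : Type*) extends DistribLattice L where
  dneg : L → L
  dneg_dneg : ∀ x : L, dneg (dneg x) = x
  dneg_sup : ∀ x y : L, dneg (x ⊔ y) = dneg x ⊓ dneg y

prefix:max "∼" => DeMorgan.dneg

section Defs

variable {α : Type*}

/-- An upward closed subset of a lattice. -/
def IsUpset [Lattice α] (F : Set α) : Prop :=
  ∀ ⦃x y : α⦄, x ∈ F → x ≤ y → y ∈ F

/-- A lattice filter: an upset closed under binary meets. -/
def IsLatFilter [Lattice α] (F : Set α) : Prop :=
  IsUpset F ∧ ∀ x y : α, x ∈ F → y ∈ F → x ⊓ y ∈ F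

/-- An `n`-filter: an upset such that for every nonempty finite `Y`, if the meet of
every nonempty subset of `Y` of size at most `n` lies in `F`, then so does the meet of `Y`. -/
def IsNFilter [Lattice α] (n : ℕ) (F : Set α) : Prop :=
  IsUpset F ∧ ∀ (Y : Finset α) (hY : Y.Nonempty),
    (∀ (X : Finset α) (hX : X.Nonempty), X ⊆ Y → X.card ≤ n → X.inf' hX id ∈ F) →
    Y.inf' hY id ∈ F

/-- A prime upset: `x ⊔ y ∈ F` implies `x ∈ F` or `y ∈ F`. -/
def IsPrimeUpset [Lattice α] (F : Set α) : Prop :=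
  ∀ x y : α, x ⊔ y ∈ F → x ∈ F ∨ y ∈ F

/-- A downward closed subset of a lattice. -/
def IsDownset [Lattice α] (I : Set α) : Prop :=
  ∀ ⦃x y : α⦄, x ∈ I → y ≤ x → y ∈ I

/-- A lattice ideal: a downset closed under binary joins. -/
def IsIdeal [Lattice α] (I : Set α) : Prop :=
  IsDownset I ∧ ∀ x y : α, x ∈ I → y ∈ I → x ⊔ y ∈ I

/-- An `n`-ideal: the order dual notion of an `n`-filter. -/
def IsNIdeal [Lattice α] (n : ℕ) (I : Set α) : Prop :=
  IsDownset I ∧ ∀ (Y : Finset α) (hY : Y.Nonempty),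
    (∀ (X : Finset α) (hX : X.Nonempty), X ⊆ Y → X.card ≤ n → X.sup' hX id ∈ I) →
    Y.sup' hY id ∈ I

variable {L : Type*} [DeMorgan L]

/-- Almost complete upset: `x ∈ F` implies `x ⊓ (y ⊔ ∼y) ∈ F`. -/
def AlmostComplete (F : Set L) : Prop := ∀ x ∈ F, ∀ y : L, x ⊓ (y ⊔ ∼y) ∈ F

/-- Complete upset: almost complete and nonempty. -/
def IsCompleteUpset (F : Set L) : Prop := AlmostComplete F ∧ F.Nonempty

/-- Almost consistent upset: `(x ⊓ ∼x) ⊔ y ∈ F` implies `y ∈ F`. -/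
def AlmostConsistent (F : Set L) : Prop := ∀ x y : L, (x ⊓ ∼x) ⊔ y ∈ F → y ∈ F

/-- Consistent upset: almost consistent and not total. -/
def IsConsistentUpset (F : Set L) : Prop := AlmostConsistent F ∧ F ≠ Set.univ

/-- Classical upset: complete and consistent. -/
def IsClassicalUpset (F : Set L) : Prop := IsCompleteUpset F ∧ IsConsistentUpset F

/-- Kalman upset. -/
def IsKalmanUpset (F : Set L) : Prop :=
  ∀ x y z u : L, ((x ⊓ ∼x) ⊓ z) ⊔ u ∈ F → ((y ⊔ ∼y) ⊓ z) ⊔ u ∈ F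

/-- A homomorphism of De Morgan lattices. -/
def IsDMHom {L M : Type*} [DeMorgan L] [DeMorgan M] (h : L → M) : Prop :=
  (∀ x y : L, h (x ⊓ y) = h x ⊓ h y) ∧ (∀ x y : L, h (x ⊔ y) = h x ⊔ h y) ∧
    ∀ x : L, h (∼x) = ∼(h x)

/-- The filter generated by all elements of the form `x ⊔ ∼x`. -/
def Fcomp (L : Type*) [DeMorgan L] : Set L :=
  {a | ∃ (s : Finset L) (hs : s.Nonempty), s.inf' hs (fun x => x ⊔ ∼x) ≤ a}

/-- The `n`-filter generated by a set. -/
def nFilterGen (n : ℕ) (U : Set L) : Set L :=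
  ⋂₀ {F : Set L | IsNFilter n F ∧ U ⊆ F}

/-- `Comp U`. -/
def CompCl (U : Set L) : Set L := {x | ∃ a ∈ U, ∃ f ∈ Fcomp L, a ⊓ f ≤ x}

/-- `Cons U`. -/
def ConsCl (U : Set L) : Set L := {x | ∃ f ∈ Fcomp L, ∼f ⊔ x ∈ U}

/-- A congruence of De Morgan lattices, as a binary relation. -/
def IsCongruence (θ : L → L → Prop) : Prop :=
  Equivalence θ ∧
  (∀ a b c d : L, θ a b → θ c d → θ (a ⊓ c) (b ⊓ d)) ∧
  (∀ a b c d : L, θ a b → θ c d → θ (a ⊔ c) (b ⊔ d)) ∧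
  ∀ a b : L, θ a b → θ (∼a) (∼b)

end Defs

/-- The four-element De Morgan lattice `DM₁` on `Bool × Bool`. -/
instance : DeMorgan (Bool × Bool) :=
  { (inferInstance : DistribLattice (Bool × Bool)) with
    dneg := fun p => (!p.2, !p.1)
    dneg_dneg := by decide
    dneg_sup := by decide }

/-- Powers of `DM₁`, with componentwise operations. -/
instance {ι : Type*} : DeMorgan (ι → Bool × Bool) :=
  { (inferInstance : DistribLattice (ι → Bool × Bool)) with
    dneg := fun f i => ∼(f i)
    dneg_dneg := fun f => funext fun i => DeMorgan.dneg_dneg (f i)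
    dneg_sup := fun f g => funext fun i => DeMorgan.dneg_sup (f i) (g i) }

section Aux7

variable {L : Type*} [DeMorgan L]

private lemma dd (x : L) : ∼∼x = x := DeMorgan.dneg_dneg x

private lemma dneg_inf' (x y : L) : ∼(x ⊓ y) = ∼x ⊔ ∼y := by
  have h := DeMorgan.dneg_sup (∼x) (∼y)
  rw [dd, dd] at h
  rw [← h, dd]

private lemma mem_fcomp_single (x : L) : x ⊔ ∼x ∈ Fcomp L :=
  ⟨{x}, Finset.singleton_nonempty x, by simp⟩

private lemma mem_fcomp_inf {f g : L} (hf : f ∈ Fcomp L) (hg : g ∈ Fcomp L) :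
    f ⊓ g ∈ Fcomp L := by
  obtain ⟨s, hs, hsf⟩ := hf
  obtain ⟨t, ht, htg⟩ := hg
  classical
  refine ⟨s ∪ t, hs.mono Finset.subset_union_left, le_inf ?_ ?_⟩
  · exact le_trans (Finset.inf'_mono _ Finset.subset_union_left hs) hsf
  · exact le_trans (Finset.inf'_mono _ Finset.subset_union_right ht) htg

private lemma dneg_G (s : Finset L) (hs : s.Nonempty) :
    ∼(s.inf' hs (fun x => x ⊔ ∼x)) = s.sup' hs (fun x => x ⊓ ∼x) := by
  induction hs using Finset.Nonempty.cons_induction with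
  | singleton a =>
      simp only [Finset.inf'_singleton, Finset.sup'_singleton, DeMorgan.dneg_sup, dd, inf_comm]
  | cons a s h hs ih =>
      rw [Finset.inf'_cons, Finset.sup'_cons, dneg_inf', ih, DeMorgan.dneg_sup, dd,
        inf_comm (∼a) a]
      exact hs

end Aux7

/-- the smallest congruence of a De Morgan lattice whose quotient is a Kleene
lattice. -/
theorem statement7 {L : Type*} [DeMorgan L] [Nonempty L] (θ : L → L → Prop)
    (hθ : ∀ a b : L, θ a b ↔ ∃ f ∈ Fcomp L, a ⊓ f = b ⊓ f ∧ ∼f ⊔ a = ∼f ⊔ b) :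
    IsCongruence θ ∧
    (∀ x y : L, θ ((x ⊓ ∼x) ⊓ (y ⊔ ∼y)) (x ⊓ ∼x)) ∧
    (∀ θ' : L → L → Prop, IsCongruence θ' →
      (∀ x y : L, θ' ((x ⊓ ∼x) ⊓ (y ⊔ ∼y)) (x ⊓ ∼x)) →
      ∀ a b : L, θ a b → θ' a b) := by

  obtain ⟨x0⟩ := ‹Nonempty L›
  have hsymmc : ∀ a b : L, θ a b → θ b a := by
    intro a b hab
    rw [hθ] at hab ⊢
    obtain ⟨f, hf, h1, h2⟩ := hab
    exact ⟨f, hf, h1.symm, h2.symm⟩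
  constructor
  · refine ⟨⟨?_, fun {a b} => hsymmc a b, ?_⟩, ?_, ?_, ?_⟩
    · -- reflexivity
      intro a
      exact (hθ a a).2 ⟨x0 ⊔ ∼x0, mem_fcomp_single x0, rfl, rfl⟩
    · -- transitivity
      intro a b c hab hbc
      rw [hθ] at hab hbc ⊢
      obtain ⟨f, hf, hf1, hf2⟩ := hab
      obtain ⟨g, hg, hg1, hg2⟩ := hbc
      refine ⟨f ⊓ g, mem_fcomp_inf hf hg, ?_, ?_⟩
      · calc a ⊓ (f ⊓ g) = a ⊓ f ⊓ g := (inf_assoc a f g).symm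
          _ = b ⊓ f ⊓ g := by rw [hf1]
          _ = b ⊓ g ⊓ f := inf_right_comm b f g
          _ = c ⊓ g ⊓ f := by rw [hg1]
          _ = c ⊓ (f ⊓ g) := by rw [inf_right_comm, inf_assoc]
      · calc ∼(f ⊓ g) ⊔ a = ∼f ⊔ ∼g ⊔ a := by rw [dneg_inf']
          _ = ∼f ⊔ a ⊔ ∼g := sup_right_comm (∼f) (∼g) a
          _ = ∼f ⊔ b ⊔ ∼g := by rw [hf2]
          _ = ∼f ⊔ (∼g ⊔ b) := by rw [sup_assoc, sup_comm b (∼g)]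
          _ = ∼f ⊔ (∼g ⊔ c) := by rw [hg2]
          _ = ∼(f ⊓ g) ⊔ c := by rw [← sup_assoc, dneg_inf']
    · -- meet compatibility
      intro a b c d hab hcd
      rw [hθ] at hab hcd ⊢
      obtain ⟨f, hf, hf1, hf2⟩ := hab
      obtain ⟨g, hg, hg1, hg2⟩ := hcd
      refine ⟨f ⊓ g, mem_fcomp_inf hf hg, ?_, ?_⟩
      · calc a ⊓ c ⊓ (f ⊓ g) = (a ⊓ f) ⊓ (c ⊓ g) := inf_inf_inf_comm a c f g
          _ = (b ⊓ f) ⊓ (d ⊓ g) := by rw [hf1, hg1]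
          _ = b ⊓ d ⊓ (f ⊓ g) := (inf_inf_inf_comm b d f g).symm
      · calc ∼(f ⊓ g) ⊔ a ⊓ c = (∼f ⊔ ∼g) ⊔ a ⊓ c := by rw [dneg_inf']
          _ = ((∼f ⊔ ∼g) ⊔ a) ⊓ ((∼f ⊔ ∼g) ⊔ c) := sup_inf_left _ a c
          _ = ((∼f ⊔ a) ⊔ ∼g) ⊓ (∼f ⊔ (∼g ⊔ c)) := by
              have e1 : (∼f ⊔ ∼g) ⊔ a = (∼f ⊔ a) ⊔ ∼g := by ac_rfl
              have e2 : (∼f ⊔ ∼g) ⊔ c = ∼f ⊔ (∼g ⊔ c) := by ac_rfl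
              rw [e1, e2]
          _ = ((∼f ⊔ b) ⊔ ∼g) ⊓ (∼f ⊔ (∼g ⊔ d)) := by rw [hf2, hg2]
          _ = ((∼f ⊔ ∼g) ⊔ b) ⊓ ((∼f ⊔ ∼g) ⊔ d) := by
              have e1 : (∼f ⊔ b) ⊔ ∼g = (∼f ⊔ ∼g) ⊔ b := by ac_rfl
              have e2 : ∼f ⊔ (∼g ⊔ d) = (∼f ⊔ ∼g) ⊔ d := by ac_rfl
              rw [e1, e2]
          _ = ∼(f ⊓ g) ⊔ b ⊓ d := by rw [← sup_inf_left, dneg_inf']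
    · -- join compatibility
      intro a b c d hab hcd
      rw [hθ] at hab hcd ⊢
      obtain ⟨f, hf, hf1, hf2⟩ := hab
      obtain ⟨g, hg, hg1, hg2⟩ := hcd
      refine ⟨f ⊓ g, mem_fcomp_inf hf hg, ?_, ?_⟩
      · calc (a ⊔ c) ⊓ (f ⊓ g) = a ⊓ (f ⊓ g) ⊔ c ⊓ (f ⊓ g) := inf_sup_right a c _
          _ = (a ⊓ f) ⊓ g ⊔ f ⊓ (c ⊓ g) := by rw [← inf_assoc, inf_left_comm c f g]
          _ = (b ⊓ f) ⊓ g ⊔ f ⊓ (d ⊓ g) := by rw [hf1, hg1]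
          _ = b ⊓ (f ⊓ g) ⊔ d ⊓ (f ⊓ g) := by rw [inf_assoc, inf_left_comm f d g]
          _ = (b ⊔ d) ⊓ (f ⊓ g) := (inf_sup_right b d _).symm
      · calc ∼(f ⊓ g) ⊔ (a ⊔ c) = (∼f ⊔ ∼g) ⊔ (a ⊔ c) := by rw [dneg_inf']
          _ = (∼f ⊔ a) ⊔ (∼g ⊔ c) := sup_sup_sup_comm (∼f) (∼g) a c
          _ = (∼f ⊔ b) ⊔ (∼g ⊔ d) := by rw [hf2, hg2]
          _ = (∼f ⊔ ∼g) ⊔ (b ⊔ d) := by ac_rfl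
          _ = ∼(f ⊓ g) ⊔ (b ⊔ d) := by rw [dneg_inf']
    · -- negation compatibility
      intro a b hab
      rw [hθ] at hab ⊢
      obtain ⟨f, hf, hf1, hf2⟩ := hab
      refine ⟨f, hf, ?_, ?_⟩
      · have h := congrArg (∼·) hf2
        simp only [DeMorgan.dneg_sup, dd] at h
        rw [inf_comm (∼a) f, inf_comm (∼b) f]
        exact h
      · have h := congrArg (∼·) hf1
        simp only [dneg_inf'] at h
        rw [sup_comm (∼f) (∼a), sup_comm (∼f) (∼b)]
        exact h
  constructor
  · -- the Kleene generators are collapsed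
    intro x y
    rw [hθ]
    refine ⟨(x ⊔ ∼x) ⊓ (y ⊔ ∼y), mem_fcomp_inf (mem_fcomp_single x) (mem_fcomp_single y),
      ?_, ?_⟩
    · have h1 : x ⊓ ∼x ≤ x ⊔ ∼x := le_trans inf_le_left le_sup_left
      have h2 : (x ⊓ ∼x) ⊓ (y ⊔ ∼y) ≤ (x ⊔ ∼x) ⊓ (y ⊔ ∼y) :=
        le_inf (le_trans inf_le_left h1) inf_le_right
      rw [inf_eq_left.mpr h2, ← inf_assoc, inf_eq_left.mpr h1]
    · have h3 : x ⊓ ∼x ≤ ∼((x ⊔ ∼x) ⊓ (y ⊔ ∼y)) := by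
        rw [dneg_inf', DeMorgan.dneg_sup, DeMorgan.dneg_sup, dd, dd, inf_comm (∼x) x]
        exact le_sup_left
      rw [sup_eq_left.mpr (le_trans inf_le_left h3), sup_eq_left.mpr h3]
  · -- minimality
    intro θ' hcong hK a b hab
    obtain ⟨hequiv, hMeet, hJoin, hNeg⟩ := hcong
    have lemA : ∀ (s : Finset L) (hs : s.Nonempty) (y : L),
        θ' (s.sup' hs (fun x => x ⊓ ∼x) ⊓ (y ⊔ ∼y)) (s.sup' hs (fun x => x ⊓ ∼x)) := by
      intro s hs
      induction hs using Finset.Nonempty.cons_induction with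
      | singleton a => intro y; simpa using hK a y
      | cons a s h hs ih =>
          intro y
          rw [Finset.sup'_cons, inf_sup_right]
          exact hJoin _ _ _ _ (hK a y) (ih y)
          exact hs
    have lemB : ∀ (s : Finset L) (hs : s.Nonempty) (t : Finset L) (ht : t.Nonempty),
        θ' (s.sup' hs (fun x => x ⊓ ∼x) ⊓ t.inf' ht (fun x => x ⊔ ∼x))
          (s.sup' hs (fun x => x ⊓ ∼x)) := by
      intro s hs t ht
      induction ht using Finset.Nonempty.cons_induction with
      | singleton a => simpa using lemA s hs a
      | cons a t h ht ih =>
          rw [Finset.inf'_cons, ← inf_assoc]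
          exact hequiv.trans (hMeet _ _ _ _ (lemA s hs a) (hequiv.refl _)) ih
          exact ht
    rw [hθ] at hab
    obtain ⟨f, ⟨s, hs, hsf⟩, hf1, hf2⟩ := hab
    set g := s.inf' hs (fun x => x ⊔ ∼x) with hgdef
    have hfg : f ⊓ g = g := inf_eq_right.mpr hsf
    have hnfg : ∼g ⊔ ∼f = ∼g := by
      have h : ∼f = ∼g ⊓ ∼f := by
        conv_lhs => rw [show f = g ⊔ f from (sup_eq_right.mpr hsf).symm, DeMorgan.dneg_sup]
      rw [h, sup_inf_self]
    have hg1 : a ⊓ g = b ⊓ g := by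
      rw [← hfg, ← inf_assoc, hf1, inf_assoc]
    have hg2 : ∼g ⊔ a = ∼g ⊔ b := by
      rw [← hnfg, sup_assoc, hf2, ← sup_assoc]
    have hgg : θ' (∼g ⊓ g) ∼g := by
      rw [hgdef, dneg_G]
      exact lemB s hs s hs
    have key : θ' (a ⊓ ∼g) (b ⊓ ∼g) := by
      have e1 : a ⊓ (∼g ⊓ g) = b ⊓ (∼g ⊓ g) := by
        rw [inf_comm (∼g) g, ← inf_assoc, hg1, inf_assoc]
      have t1 : θ' (a ⊓ ∼g) (a ⊓ (∼g ⊓ g)) :=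
        hMeet _ _ _ _ (hequiv.refl a) (hequiv.symm hgg)
      have t2 : θ' (b ⊓ (∼g ⊓ g)) (b ⊓ ∼g) :=
        hMeet _ _ _ _ (hequiv.refl b) hgg
      exact hequiv.trans t1 (hequiv.trans (e1 ▸ hequiv.refl _) t2)
    have ea : a = (a ⊓ ∼g) ⊔ (a ⊓ b) := by
      conv_lhs => rw [← inf_eq_left.mpr (le_sup_right : a ≤ ∼g ⊔ a), hg2, inf_sup_left]
    have eb : b = (b ⊓ ∼g) ⊔ (a ⊓ b) := by
      conv_lhs => rw [← inf_eq_left.mpr (le_sup_right : b ≤ ∼g ⊔ b), ← hg2, inf_sup_left,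
        inf_comm b a]
    have hfin : θ' ((a ⊓ ∼g) ⊔ (a ⊓ b)) ((b ⊓ ∼g) ⊔ (a ⊓ b)) :=
      hJoin _ _ _ _ key (hequiv.refl _)
    rw [← ea, ← eb] at hfin
    exact hfin
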